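/- Let v ∈ H¹₀(U) be Lipschitz with γ_q(Dv) ≤ 1 almost everywhere, where 1/p + 1/q = 1. Then v(x) ≤ d_p(x, ∂U) for all x ∈ U, where d_p is the distance induced by the norm γ_p. -/

import Mathlib

open Set

/-- The `r`-norm on `ℝ²`. -/
noncomputable def gammaR (r : ℝ) (x : ℝ × ℝ) : ℝ :=
  (|x.1| ^ r + |x.2| ^ r) ^ (1 / r)

/-- The `p`-distance to the boundary of `U`. -/
noncomputable def dP (p : ℝ) (U : Set (ℝ × ℝ)) (x : ℝ × ℝ) : ℝ :=
  sInf {t : ℝ | ∃ y ∈ frontier U, t = gammaR p (x - y)}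

/-- The gradient of `v` as a vector in `ℝ²`. -/
noncomputable def grad2 (v : ℝ × ℝ → ℝ) (x : ℝ × ℝ) : ℝ × ℝ :=
  (fderiv ℝ v x (1, 0), fderiv ℝ v x (0, 1))

open MeasureTheory Filter intervalIntegral


lemma gammaR_nonneg (r : ℝ) (x : ℝ × ℝ) : 0 ≤ gammaR r x := by
  apply Real.rpow_nonneg
  positivity

lemma gammaR_neg (r : ℝ) (x : ℝ × ℝ) : gammaR r (-x) = gammaR r x := by
  simp [gammaR]

lemma gammaR_smul (r : ℝ) (hr : r ≠ 0) (c : ℝ) (x : ℝ × ℝ) :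
    gammaR r (c • x) = |c| * gammaR r x := by
  simp only [gammaR, Prod.smul_fst, Prod.smul_snd, smul_eq_mul, abs_mul]
  rw [Real.mul_rpow (abs_nonneg _) (abs_nonneg _), Real.mul_rpow (abs_nonneg _) (abs_nonneg _),
    ← mul_add, Real.mul_rpow (by positivity) (by positivity),
    ← Real.rpow_mul (abs_nonneg c), mul_one_div, div_self hr, Real.rpow_one]

lemma holder2 {p q : ℝ} (hpq : Real.HolderConjugate p q) (a b : ℝ × ℝ) :
    |a.1 * b.1 + a.2 * b.2| ≤ gammaR p a * gammaR q b := by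
  have key : ∀ u : ℝ × ℝ, u.1 * b.1 + u.2 * b.2 ≤ gammaR p u * gammaR q b := by
    intro u
    have := Real.inner_le_Lp_mul_Lq (Finset.univ : Finset (Fin 2)) ![u.1, u.2] ![b.1, b.2] hpq
    simpa [Fin.sum_univ_two, gammaR] using this
  rcases abs_cases (a.1 * b.1 + a.2 * b.2) with ⟨h, _⟩ | ⟨h, _⟩
  · rw [h]; exact key a
  · rw [h]
    have h2 := key (-a)
    rw [gammaR_neg] at h2
    have : (-a).1 * b.1 + (-a).2 * b.2 = -(a.1 * b.1 + a.2 * b.2) := by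
      simp; ring
    rw [this] at h2
    linarith



lemma abs_sub_le_of_ae_deriv_le {g : ℝ → ℝ} {K : NNReal} (hg : LipschitzWith K g)
    {a b C : ℝ} (hab : a < b) (hC : 0 ≤ C)
    (hae : ∀ᵐ t : ℝ, t ∈ Set.Ioo a b → |deriv g t| ≤ C) :
    |g b - g a| ≤ C * (b - a) := by
  have hgc : Continuous g := hg.continuous
  have hint : ∀ u v : ℝ, IntervalIntegrable g volume u v := fun u v =>
    hgc.intervalIntegrable u v
  set F : ℝ → ℝ := fun s => ∫ t in a..s, g t with hF_def
  have hF : ∀ s : ℝ, HasDerivAt F (g s) s := fun s =>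
    intervalIntegral.integral_hasDerivAt_right (hint a s)
      (hgc.stronglyMeasurableAtFilter _ _) hgc.continuousAt
  set h : ℕ → ℝ := fun n => 1 / (n + 1) with hh_def
  have hhpos : ∀ n, 0 < h n := fun n => by positivity
  have hh0 : Filter.Tendsto h Filter.atTop (nhds 0) := tendsto_one_div_add_atTop_nhds_zero_nat
  -- difference quotient integral identity
  have key : ∀ n : ℕ, (∫ t in a..b, (g (t + h n) - g t) / h n)
      = ((F (b + h n) - F b) - (F (a + h n) - F a)) / h n := by
    intro n
    rw [intervalIntegral.integral_div]
    congr 1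
    have i1 : IntervalIntegrable (fun t => g (t + h n)) volume a b :=
      Continuous.intervalIntegrable (by continuity) a b
    rw [intervalIntegral.integral_sub i1 (hint a b)]
    have comp : (∫ t in a..b, g (t + h n)) = ∫ t in (a + h n)..(b + h n), g t :=
      intervalIntegral.integral_comp_add_right (fun t => g t) (h n)
    rw [comp]
    have e1 : F (b + h n) = (∫ t in a..(a + h n), g t) + ∫ t in (a + h n)..(b + h n), g t := by
      rw [intervalIntegral.integral_add_adjacent_intervals (hint a _) (hint _ _)]
    have e2 : F (a + h n) = ∫ t in a..(a + h n), g t := rfl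
    have e3 : F b = ∫ t in a..b, g t := rfl
    have e4 : F a = 0 := intervalIntegral.integral_same
    rw [e1, e2, e3, e4]
    ring
  -- LHS tendsto g b - g a
  have slopeF : ∀ s : ℝ, Filter.Tendsto (fun n => (F (s + h n) - F s) / h n)
      Filter.atTop (nhds (g s)) := by
    intro s
    have hslope := (hasDerivAt_iff_tendsto_slope.1 (hF s))
    have hseq : Filter.Tendsto (fun n => s + h n) Filter.atTop (nhdsWithin s {s}ᶜ) := by
      apply tendsto_nhdsWithin_of_tendsto_nhds_of_eventually_within
      · simpa using (tendsto_const_nhds.add hh0)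
      · filter_upwards with n
        simp only [Set.mem_compl_iff, Set.mem_singleton_iff]
        have := hhpos n
        intro hcon
        nlinarith [hcon ▸ (by linarith : s < s + h n)]
    have := hslope.comp hseq
    convert this using 2 with n
    simp [slope, div_eq_inv_mul]
  have lhs_lim : Filter.Tendsto (fun n => ((F (b + h n) - F b) - (F (a + h n) - F a)) / h n)
      Filter.atTop (nhds (g b - g a)) := by
    have := (slopeF b).sub (slopeF a)
    convert this using 2 with n
    ring
  -- bound on deriv
  have derivK : ∀ t : ℝ, |deriv g t| ≤ (K : ℝ) := by
    intro t
    have h1 : ‖fderiv ℝ g t‖ ≤ (K : ℝ) := norm_fderiv_le_of_lipschitz ℝ hg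
    have h2 : deriv g t = fderiv ℝ g t 1 := rfl
    calc |deriv g t| = ‖fderiv ℝ g t 1‖ := by rw [h2]; rfl
      _ ≤ ‖fderiv ℝ g t‖ * ‖(1:ℝ)‖ := (fderiv ℝ g t).le_opNorm 1
      _ ≤ (K : ℝ) := by simpa using h1
  -- integrability of deriv g
  have hderiv_meas : Measurable (deriv g) := measurable_deriv g
  have hbound_int : ∀ u v : ℝ, IntegrableOn (deriv g) (Set.Ioc u v) volume := by
    intro u v
    apply Measure.integrableOn_of_bounded (M := (K : ℝ)) measure_Ioc_lt_top.ne
      hderiv_meas.aestronglyMeasurable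
    filter_upwards with t using by simpa [Real.norm_eq_abs] using derivK t
  have hderiv_int : IntervalIntegrable (deriv g) volume a b :=
    ⟨hbound_int a b, hbound_int b a⟩
  -- dominated convergence
  have rhs_lim : Filter.Tendsto (fun n => ∫ t in a..b, (g (t + h n) - g t) / h n)
      Filter.atTop (nhds (∫ t in a..b, deriv g t)) := by
    apply intervalIntegral.tendsto_integral_filter_of_dominated_convergence (bound := fun _ => (K : ℝ))
    · filter_upwards with n
      exact (Continuous.aestronglyMeasurable (by continuity)).restrict
    · filter_upwards with n
      filter_upwards with t _
      have := hg.dist_le_mul (t + h n) t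
      rw [Real.dist_eq, Real.dist_eq] at this
      have hpos := hhpos n
      rw [Real.norm_eq_abs, abs_div, abs_of_pos hpos, div_le_iff₀ hpos]
      simpa [abs_of_pos hpos] using this
    · exact intervalIntegrable_const
    · have hdiff : ∀ᵐ t : ℝ, DifferentiableAt ℝ g t := hg.ae_differentiableAt
      filter_upwards [hdiff] with t hd _
      have hslope := hasDerivAt_iff_tendsto_slope.1 hd.hasDerivAt
      have hseq : Filter.Tendsto (fun n => t + h n) Filter.atTop (nhdsWithin t {t}ᶜ) := by
        apply tendsto_nhdsWithin_of_tendsto_nhds_of_eventually_within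
        · simpa using (tendsto_const_nhds.add hh0)
        · filter_upwards with n
          simp only [Set.mem_compl_iff, Set.mem_singleton_iff]
          have := hhpos n
          intro hcon
          nlinarith [hcon ▸ (by linarith : t < t + h n)]
      have := hslope.comp hseq
      convert this using 2 with n
      simp [slope, div_eq_inv_mul]
  -- identify limit
  have main : g b - g a = ∫ t in a..b, deriv g t := by
    apply tendsto_nhds_unique lhs_lim
    have : (fun n => ((F (b + h n) - F b) - (F (a + h n) - F a)) / h n)
        = fun n => ∫ t in a..b, (g (t + h n) - g t) / h n := by
      funext n; exact (key n).symm
    rw [this]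
    exact rhs_lim
  rw [main]
  calc |∫ t in a..b, deriv g t| ≤ ∫ t in a..b, |deriv g t| :=
        intervalIntegral.abs_integral_le_integral_abs hab.le
    _ ≤ ∫ t in a..b, C := by
        apply intervalIntegral.integral_mono_ae_restrict hab.le hderiv_int.abs
          intervalIntegrable_const
        have hIoo : ∀ᵐ t ∂(volume.restrict (Set.Icc a b)), t ∈ Set.Ioo a b := by
          rw [ae_restrict_iff' measurableSet_Icc]
          have hns : (volume : Measure ℝ) ({a, b} : Set ℝ) = 0 :=
            measure_union_null (by simp : (volume : Measure ℝ) {a} = 0)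
              (by simp : (volume : Measure ℝ) {b} = 0)
          rw [← MeasureTheory.compl_mem_ae_iff] at hns
          filter_upwards [hns] with t ht hta
          simp only [Set.mem_compl_iff, Set.mem_insert_iff, Set.mem_singleton_iff, not_or] at ht
          exact ⟨lt_of_le_of_ne hta.1 (Ne.symm ht.1), lt_of_le_of_ne hta.2 ht.2⟩
        filter_upwards [hIoo, ae_restrict_of_ae hae] with t h1 h2
        exact h2 h1
    _ = C * (b - a) := by simp [mul_comm]

lemma seg_est {U : Set (ℝ × ℝ)} (hUo : IsOpen U) {p q : ℝ} (hpq : Real.HolderConjugate p q)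
    {v : ℝ × ℝ → ℝ} {K : NNReal} (hLip : LipschitzWith K v)
    (hgrad : ∀ᵐ z : ℝ × ℝ, z ∈ U → DifferentiableAt ℝ v z ∧ gammaR q (grad2 v z) ≤ 1)
    {a b : ℝ × ℝ} (hseg : segment ℝ a b ⊆ U) :
    |v b - v a| ≤ gammaR p (b - a) := by
  rcases eq_or_ne a b with rfl | hab
  · simpa using gammaR_nonneg p (a - a)
  set w : ℝ × ℝ := b - a with hw_def
  have hw : w ≠ 0 := sub_ne_zero.2 (Ne.symm hab)
  set e : ℝ × ℝ := (-w.2, w.1) with he_def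
  have hwnorm : ‖w‖ ≠ 0 := norm_ne_zero_iff.2 hw
  -- thickening
  have hcomp : IsCompact (segment ℝ a b) := by
    rw [segment_eq_image']
    exact (isCompact_Icc).image (by continuity)
  obtain ⟨δ, hδpos, hδsub⟩ := hcomp.exists_thickening_subset_open hUo hseg
  -- the linear map
  set Φ : (ℝ × ℝ) →ₗ[ℝ] (ℝ × ℝ) :=
    (LinearMap.fst ℝ ℝ ℝ).smulRight e + (LinearMap.snd ℝ ℝ ℝ).smulRight w with hΦ_def
  have hΦ_apply : ∀ z : ℝ × ℝ, Φ z = z.1 • e + z.2 • w := fun z => rfl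
  have hdet : LinearMap.det Φ ≠ 0 := by
    have : LinearMap.det Φ = -(w.1 ^ 2 + w.2 ^ 2) := by
      rw [← LinearMap.det_toMatrix (Module.Basis.finTwoProd ℝ), Matrix.det_fin_two]
      simp [LinearMap.toMatrix_apply, hΦ_apply, Module.Basis.finTwoProd, he_def]
      ring
    rw [this]
    simp only [ne_eq, neg_eq_zero]
    intro hcon
    apply hw
    have h1 : w.1 = 0 := by nlinarith [sq_nonneg w.1, sq_nonneg w.2]
    have h2 : w.2 = 0 := by nlinarith [sq_nonneg w.1, sq_nonneg w.2]
    exact Prod.ext h1 h2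
  -- the good set
  set G : Set (ℝ × ℝ) := {z | z ∈ U → DifferentiableAt ℝ v z ∧ gammaR q (grad2 v z) ≤ 1}
    with hG_def
  have hGfull : volume Gᶜ = 0 := by
    rw [← compl_mem_ae_iff, compl_compl]
    exact hgrad
  have hpre : volume {z : ℝ × ℝ | ¬ (a + Φ z) ∈ G} = 0 := by
    have heq : {z : ℝ × ℝ | ¬ (a + Φ z) ∈ G} = Φ ⁻¹' ((fun y => a + y) ⁻¹' Gᶜ) := rfl
    rw [heq, Measure.addHaar_preimage_linearMap volume hdet,
      measure_preimage_add volume a Gᶜ, hGfull, mul_zero]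
  have hae2 : ∀ᵐ ε : ℝ, ∀ᵐ t : ℝ, (a + Φ (ε, t)) ∈ G := by
    have : ∀ᵐ z : ℝ × ℝ, (a + Φ z) ∈ G := by
      rw [MeasureTheory.ae_iff]
      exact hpre
    rw [MeasureTheory.Measure.volume_eq_prod] at this
    exact Measure.ae_ae_of_ae_prod this
  -- choice of good epsilons
  have hchoice : ∀ m : ℝ, 0 < m → ∃ ε : ℝ, ε ∈ Set.Ioo 0 m ∧ ∀ᵐ t : ℝ, (a + Φ (ε, t)) ∈ G := by
    intro m hm
    by_contra hcon
    push_neg at hcon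
    have hsub : Set.Ioo (0:ℝ) m ⊆ {ε : ℝ | ¬ ∀ᵐ t : ℝ, (a + Φ (ε, t)) ∈ G} := by
      intro ε hε
      exact Filter.not_eventually.2 (hcon ε hε)
    have hnull : volume {ε : ℝ | ¬ ∀ᵐ t : ℝ, (a + Φ (ε, t)) ∈ G} = 0 := by
      rw [← MeasureTheory.ae_iff]
      exact hae2
    have := measure_mono_null hsub hnull
    rw [Real.volume_Ioo] at this
    simp only [ENNReal.ofReal_eq_zero, sub_zero] at this
    linarith
  -- the per-epsilon estimate
  have per_eps : ∀ ε : ℝ, 0 < ε → ε * ‖e‖ < δ → (∀ᵐ t : ℝ, (a + Φ (ε, t)) ∈ G) →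
      |v (b + ε • e) - v (a + ε • e)| ≤ gammaR p w := by
    intro ε hεpos hεδ hεG
    set g : ℝ → ℝ := fun t => v (a + Φ (ε, t)) with hg_def
    -- Lipschitz
    have hA_lip : LipschitzWith ‖w‖₊ (fun t : ℝ => a + Φ (ε, t)) := by
      apply LipschitzWith.of_dist_le_mul
      intro t t'
      have : (a + Φ (ε, t)) - (a + Φ (ε, t')) = (t - t') • w := by
        simp only [hΦ_apply]
        module
      rw [dist_eq_norm, this, norm_smul, Real.dist_eq]
      simp [Real.norm_eq_abs, mul_comm]
    have hg_lip : LipschitzWith (K * ‖w‖₊) g := hLip.comp hA_lip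
    -- membership in U
    have hmem : ∀ t ∈ Set.Icc (0:ℝ) 1, (a + Φ (ε, t)) ∈ U := by
      intro t ht
      apply hδsub
      rw [Metric.mem_thickening_iff]
      refine ⟨a + t • w, ?_, ?_⟩
      · rw [segment_eq_image' ℝ a b]
        exact ⟨t, ht, rfl⟩
      · have : (a + Φ (ε, t)) - (a + t • w) = ε • e := by
          simp only [hΦ_apply]; module
        rw [dist_eq_norm, this, norm_smul, Real.norm_eq_abs, abs_of_pos hεpos]
        exact hεδ
    -- ae derivative bound
    have hae3 : ∀ᵐ t : ℝ, t ∈ Set.Ioo (0:ℝ) 1 → |deriv g t| ≤ gammaR p w := by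
      filter_upwards [hεG] with t hG ht
      have hPU : (a + Φ (ε, t)) ∈ U := hmem t (Set.mem_Icc_of_Ioo ht)
      obtain ⟨hdiff, hbd⟩ := hG hPU
      -- derivative of g
      have hA : HasDerivAt (fun t : ℝ => a + Φ (ε, t)) w t := by
        have h1 : HasDerivAt (fun t : ℝ => t • w) ((1:ℝ) • w) t :=
          (hasDerivAt_id t).smul_const w
        have h2 : HasDerivAt (fun t : ℝ => (a + ε • e) + t • w) ((1:ℝ) • w) t :=
          h1.const_add _
        have : (fun t : ℝ => a + Φ (ε, t)) = fun t : ℝ => (a + ε • e) + t • w := by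
          funext t; simp only [hΦ_apply]; module
        rw [this]
        simpa using h2
      have hgd : HasDerivAt g (fderiv ℝ v (a + Φ (ε, t)) w) t :=
        (hdiff.hasFDerivAt).comp_hasDerivAt t hA
      rw [hgd.deriv]
      have hfd : fderiv ℝ v (a + Φ (ε, t)) w
          = w.1 * (grad2 v (a + Φ (ε, t))).1 + w.2 * (grad2 v (a + Φ (ε, t))).2 := by
        have hw2 : w = w.1 • ((1:ℝ),(0:ℝ)) + w.2 • ((0:ℝ),(1:ℝ)) := by simp
        rw [grad2]
        conv_lhs => rw [hw2]
        rw [map_add, _root_.map_smul, _root_.map_smul]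
        simp [smul_eq_mul]
      rw [hfd]
      calc |w.1 * (grad2 v (a + Φ (ε, t))).1 + w.2 * (grad2 v (a + Φ (ε, t))).2|
          ≤ gammaR p w * gammaR q (grad2 v (a + Φ (ε, t))) := holder2 hpq w _
        _ ≤ gammaR p w * 1 := by
            apply mul_le_mul_of_nonneg_left hbd (gammaR_nonneg p w)
        _ = gammaR p w := mul_one _
    have hkey := abs_sub_le_of_ae_deriv_le hg_lip (by norm_num : (0:ℝ) < 1)
      (gammaR_nonneg p w) hae3
    have hg1 : g 1 = v (b + ε • e) := by
      simp only [hg_def, hΦ_apply]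
      congr 1
      rw [hw_def]
      module
    have hg0 : g 0 = v (a + ε • e) := by
      simp only [hg_def, hΦ_apply]
      congr 1
      module
    rw [hg1, hg0] at hkey
    simpa using hkey
  -- sequence of epsilons
  have hεn : ∀ n : ℕ, ∃ ε : ℝ, ε ∈ Set.Ioo 0 (min (δ / (‖e‖ + 1)) (1 / (n + 1)))
      ∧ ∀ᵐ t : ℝ, (a + Φ (ε, t)) ∈ G := by
    intro n
    apply hchoice
    apply lt_min
    · positivity
    · positivity
  choose εs hεs hεsG using hεn
  have hεs_bound : ∀ n, |v (b + εs n • e) - v (a + εs n • e)| ≤ gammaR p w := by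
    intro n
    obtain ⟨h1, h2⟩ := Set.mem_Ioo.1 (hεs n)
    apply per_eps _ h1 _ (hεsG n)
    have hlt : εs n < δ / (‖e‖ + 1) := lt_of_lt_of_le h2 (min_le_left _ _)
    have hepos : (0:ℝ) < ‖e‖ + 1 := by positivity
    calc εs n * ‖e‖ ≤ εs n * (‖e‖ + 1) := by nlinarith [h1]
      _ < δ / (‖e‖ + 1) * (‖e‖ + 1) := by nlinarith [h1, hlt]
      _ = δ := by field_simp
  -- limit
  have hεs0 : Filter.Tendsto εs Filter.atTop (nhds 0) := by
    apply squeeze_zero (fun n => (Set.mem_Ioo.1 (hεs n)).1.le)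
      (fun n => ((Set.mem_Ioo.1 (hεs n)).2.le.trans (min_le_right _ _)))
    exact tendsto_one_div_add_atTop_nhds_zero_nat
  have hlim : Filter.Tendsto (fun n => |v (b + εs n • e) - v (a + εs n • e)|)
      Filter.atTop (nhds (|v b - v a|)) := by
    have hvb : Filter.Tendsto (fun n => v (b + εs n • e)) Filter.atTop (nhds (v b)) := by
      apply (hLip.continuous.tendsto b).comp
      have : Filter.Tendsto (fun n => b + εs n • e) Filter.atTop (nhds (b + (0:ℝ) • e)) :=
        tendsto_const_nhds.add ((hεs0.smul_const e))
      simpa using this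
    have hva : Filter.Tendsto (fun n => v (a + εs n • e)) Filter.atTop (nhds (v a)) := by
      apply (hLip.continuous.tendsto a).comp
      have : Filter.Tendsto (fun n => a + εs n • e) Filter.atTop (nhds (a + (0:ℝ) • e)) :=
        tendsto_const_nhds.add ((hεs0.smul_const e))
      simpa using this
    exact (hvb.sub hva).abs
  exact le_of_tendsto hlim (Filter.Eventually.of_forall hεs_bound)



/-- A Lipschitz function vanishing on the boundary whose gradient satisfies
`γ_q(Dv) ≤ 1` a.e. is bounded above by the `p`-distance to the boundary. -/
theorem le_dP_of_gradient_constraint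
    (U : Set (ℝ × ℝ)) (hUo : IsOpen U) (hUb : Bornology.IsBounded U)
    (p q : ℝ) (hq : 1 < q) (hp : 1 < p) (hpq : 1 / p + 1 / q = 1)
    (v : ℝ × ℝ → ℝ) (hLip : ∃ K, LipschitzWith K v)
    (hbd : ∀ y ∈ frontier U, v y = 0)
    (hgrad : ∀ᵐ x : ℝ × ℝ, x ∈ U → DifferentiableAt ℝ v x ∧ gammaR q (grad2 v x) ≤ 1)
    (x : ℝ × ℝ) (hx : x ∈ U) :
    v x ≤ dP p U x := by
  obtain ⟨K, hLipK⟩ := hLip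
  have hpq' : Real.HolderConjugate p q := ⟨by rw [inv_one, ← one_div, ← one_div]; exact hpq, by linarith, by linarith⟩
  -- frontier is nonempty
  have hfront : (frontier U).Nonempty := by
    by_contra hemp
    rw [Set.not_nonempty_iff_eq_empty] at hemp
    have hclopen : IsClopen U := isClopen_iff_frontier_eq_empty.2 hemp
    rcases isClopen_iff.1 hclopen with h | h
    · rw [h] at hx; exact hx
    · rw [h] at hUb
      obtain ⟨r, hr⟩ := (Metric.isBounded_iff_subset_closedBall (0 : ℝ × ℝ)).1 hUb
      have := hr (Set.mem_univ ((|r| + 1, 0) : ℝ × ℝ))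
      rw [Metric.mem_closedBall, dist_zero_right] at this
      have hn : ‖((|r| + 1, 0) : ℝ × ℝ)‖ = |r| + 1 := by
        rw [Prod.norm_def]
        simp only [norm_zero, Real.norm_eq_abs]
        rw [abs_of_nonneg (by positivity : (0:ℝ) ≤ |r| + 1)]
        exact max_eq_left (by positivity)
      rw [hn] at this
      have : |r| ≤ r := by linarith
      nlinarith [abs_nonneg r, le_abs_self r]
  -- the key claim
  have claim : ∀ y ∈ frontier U, v x ≤ gammaR p (x - y) := by
    intro y hy
    have hyU : y ∉ U := by
      rw [hUo.frontier_eq] at hy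
      exact hy.2
    set f : ℝ → ℝ × ℝ := fun t => x + t • (y - x) with hf_def
    have hfc : Continuous f := by continuity
    set S' : Set ℝ := {t : ℝ | t ∈ Set.Icc (0:ℝ) 1 ∧ f t ∉ U} with hS_def
    have h1S : (1:ℝ) ∈ S' := by
      constructor
      · exact ⟨zero_le_one, le_refl 1⟩
      · simp only [hf_def, one_smul]
        convert hyU using 2
        module
    have hSne : S'.Nonempty := ⟨1, h1S⟩
    have hSbdd : BddBelow S' := ⟨0, fun t ht => ht.1.1⟩
    set T : ℝ := sInf S' with hT_def
    have hT1 : T ≤ 1 := csInf_le hSbdd h1S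
    have hT0 : 0 ≤ T := le_csInf hSne fun t ht => ht.1.1
    have hbelow : ∀ t : ℝ, 0 ≤ t → t < T → f t ∈ U := by
      intro t ht0 htT
      by_contra hcon
      have : t ∈ S' := ⟨⟨ht0, htT.le.trans hT1⟩, hcon⟩
      exact absurd (csInf_le hSbdd this) (not_le.2 htT)
    have hTpos : 0 < T := by
      have hopen : IsOpen (f ⁻¹' U) := hUo.preimage hfc
      have h0mem : (0:ℝ) ∈ f ⁻¹' U := by
        simp only [Set.mem_preimage, hf_def, zero_smul, add_zero]
        exact hx
      obtain ⟨η, hηpos, hη⟩ := Metric.isOpen_iff.1 hopen 0 h0mem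
      have : ∀ t ∈ S', η / 2 ≤ t := by
        intro t ht
        by_contra hcon
        push_neg at hcon
        have htb : |t| < η := by
          rw [abs_of_nonneg ht.1.1]; linarith
        have : t ∈ f ⁻¹' U := hη (by simpa [Metric.mem_ball, Real.dist_eq] using htb)
        exact ht.2 this
      have := le_csInf hSne this
      linarith
    set z : ℝ × ℝ := f T with hz_def
    have hzU : z ∉ U := by
      intro hcon
      have hopen : IsOpen (f ⁻¹' U) := hUo.preimage hfc
      obtain ⟨η, hηpos, hη⟩ := Metric.isOpen_iff.1 hopen T hcon
      obtain ⟨t', ht'S, ht'lt⟩ := (csInf_lt_iff hSbdd hSne).1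
        (by linarith : sInf S' < T + η)
      have hTt' : T ≤ t' := csInf_le hSbdd ht'S
      have : t' ∈ f ⁻¹' U := by
        apply hη
        rw [Metric.mem_ball, Real.dist_eq, abs_of_nonneg (by linarith : (0:ℝ) ≤ t' - T)]
        linarith
      exact ht'S.2 this
    have hzcl : z ∈ closure U := by
      have hseq : Filter.Tendsto (fun n : ℕ => T - T / (n + 2)) Filter.atTop (nhds T) := by
        have h2 : Filter.Tendsto (fun n : ℕ => T / ((n:ℝ) + 2)) Filter.atTop (nhds 0) := by
          apply Filter.Tendsto.div_atTop tendsto_const_nhds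
          exact Filter.tendsto_atTop_add_const_right _ 2 tendsto_natCast_atTop_atTop
        simpa using (tendsto_const_nhds.sub h2)
      apply mem_closure_of_tendsto ((hfc.tendsto T).comp hseq)
      filter_upwards with n
      apply hbelow
      · have h4 : T / ((n:ℝ) + 2) ≤ T :=
          div_le_self hT0 (by linarith [Nat.cast_nonneg (α := ℝ) n] : (1:ℝ) ≤ (n:ℝ) + 2)
        linarith
      · have h5 : 0 < T / ((n:ℝ) + 2) := by positivity
        linarith
    have hzfront : z ∈ frontier U := by
      rw [hUo.frontier_eq]
      exact ⟨hzcl, hzU⟩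
    -- per-s estimate
    have hper : ∀ s : ℝ, 0 ≤ s → s < 1 →
        v x ≤ v (f (s * T)) + gammaR p (x - y) := by
      intro s hs0 hs1
      have hsub : segment ℝ x (f (s * T)) ⊆ U := by
        intro u hu
        rw [segment_eq_image' ℝ] at hu
        obtain ⟨θ, hθ, rfl⟩ := hu
        have heq : x + θ • (f (s * T) - x) = f (θ * (s * T)) := by
          simp only [hf_def]
          module
        suffices h : f (θ * (s * T)) ∈ U by rwa [← heq] at h
        apply hbelow
        · exact mul_nonneg hθ.1 (mul_nonneg hs0 hT0)
        · rcases eq_or_lt_of_le hs0 with rfl | hs0'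
          · simp only [zero_mul, mul_zero]; exact hTpos
          · calc θ * (s * T) ≤ 1 * (s * T) := by
                  apply mul_le_mul_of_nonneg_right hθ.2 (by positivity)
              _ = s * T := one_mul _
              _ < 1 * T := by apply mul_lt_mul_of_pos_right hs1 hTpos
              _ = T := one_mul _
      have hest := seg_est hUo hpq' hLipK hgrad hsub
      have hdiff : f (s * T) - x = (s * T) • (y - x) := by simp [hf_def]
      rw [hdiff, gammaR_smul p (by positivity : p ≠ 0)] at hest
      have habs : |s * T| = s * T := abs_of_nonneg (by positivity)
      rw [habs] at hest
      have hxy : gammaR p (y - x) = gammaR p (x - y) := by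
        rw [← gammaR_neg p (y - x), neg_sub]
      rw [hxy] at hest
      have h1 : v (f (s * T)) - v x ≥ -(s * T * gammaR p (x - y)) := by
        have := abs_le.1 hest
        linarith [this.1]
      have h2 : s * T * gammaR p (x - y) ≤ gammaR p (x - y) := by
        have hγ := gammaR_nonneg p (x - y)
        have hsT : s * T ≤ 1 := by nlinarith
        nlinarith [mul_nonneg (sub_nonneg.2 hsT) hγ]
      linarith
    -- limit s → 1
    have hsn : Filter.Tendsto (fun n : ℕ => 1 - 1 / ((n:ℝ) + 1)) Filter.atTop (nhds 1) := by
      have := tendsto_one_div_add_atTop_nhds_zero_nat (𝕜 := ℝ)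
      simpa using (tendsto_const_nhds.sub this)
    have hvz : Filter.Tendsto (fun n : ℕ => v (f ((1 - 1 / ((n:ℝ) + 1)) * T)))
        Filter.atTop (nhds (v z)) := by
      apply ((hLipK.continuous.comp hfc).tendsto T).comp
      have := hsn.mul_const T
      simpa using this
    have hvz0 : v z = 0 := hbd z hzfront
    have : ∀ n : ℕ, v x - gammaR p (x - y) ≤ v (f ((1 - 1 / ((n:ℝ) + 1)) * T)) := by
      intro n
      have hs0 : (0:ℝ) ≤ 1 - 1 / ((n:ℝ) + 1) := by
        have : 1 / ((n:ℝ) + 1) ≤ 1 := by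
          rw [div_le_one (by positivity)]; linarith [Nat.cast_nonneg (α := ℝ) n]
        linarith
      have hs1 : 1 - 1 / ((n:ℝ) + 1) < 1 := by
        have : 0 < 1 / ((n:ℝ) + 1) := by positivity
        linarith
      linarith [hper _ hs0 hs1]
    have := ge_of_tendsto hvz (Filter.Eventually.of_forall this)
    rw [hvz0] at this
    linarith
  -- conclude
  rw [dP]
  apply le_csInf
  · obtain ⟨y, hy⟩ := hfront
    exact ⟨gammaR p (x - y), y, hy, rfl⟩
  · rintro t ⟨y, hy, rfl⟩
    exact claim y hy
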